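/- arXiv:2507.02889 — 2 statements merged into one kernel-verified Lean document; each statement's English description precedes it below -/
import Mathlib

section
/- Let α > 1, β > 0, and let s > 0 be a real number. Then ∫₀^∞ e^{−st} · (∑_{k=0}^∞ (− ψ(αk+β) / Γ(αk+β)) · t^k) dt = − ∑_{k=0}^∞ (k! · ψ(αk+β) / Γ(αk+β)) · s^{−k−1}. (The integrand series is the term-by-term derivative with respect to β of the Mittag-Leffler function E_{α,β}(t), and both the integral and the right-hand series converge since α > 1.) -/
open Real MeasureTheory

open Set Filter

/-- The digamma function `ψ(x) = the logarithmic derivative of Γ`, i.e. the derivative of `log ∘ Γ`. -/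
noncomputable def digamma (x : ℝ) : ℝ := deriv (fun y : ℝ => Real.log (Real.Gamma y)) x

lemma diffAt_logGamma {x : ℝ} (hx : 0 < x) :
    DifferentiableAt ℝ (Real.log ∘ Real.Gamma) x := by
  refine (Real.differentiableAt_Gamma ?_).log (Real.Gamma_ne_zero ?_) <;>
    exact fun m => ((neg_nonpos.mpr m.cast_nonneg).trans_lt hx).ne'

lemma digamma_eq (x : ℝ) : digamma x = deriv (Real.log ∘ Real.Gamma) x := rfl

lemma logGamma_add_one {x : ℝ} (hx : 0 < x) :
    (Real.log ∘ Real.Gamma) (x + 1) = (Real.log ∘ Real.Gamma) x + Real.log x := by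
  simp only [Function.comp_apply, Real.Gamma_add_one hx.ne',
    Real.log_mul hx.ne' (Real.Gamma_pos_of_pos hx).ne', add_comm]

lemma digamma_le_log {x : ℝ} (hx : 0 < x) : digamma x ≤ Real.log x := by
  have h := Real.convexOn_log_Gamma.deriv_le_slope (Set.mem_Ioi.2 hx)
    (Set.mem_Ioi.2 (by linarith : (0:ℝ) < x + 1)) (by linarith) (diffAt_logGamma hx)
  rw [← digamma_eq] at h
  refine h.trans (le_of_eq ?_)
  rw [slope_def_field, logGamma_add_one hx, show x + 1 - x = (1:ℝ) by ring, div_one]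
  ring

lemma log_le_digamma {x : ℝ} (hx : 0 < x) : Real.log x ≤ digamma (x + 1) := by
  have h := Real.convexOn_log_Gamma.slope_le_deriv (Set.mem_Ioi.2 hx)
    (Set.mem_Ioi.2 (by linarith : (0:ℝ) < x + 1)) (by linarith)
    (diffAt_logGamma (by linarith))
  rw [← digamma_eq] at h
  refine (le_of_eq ?_).trans h
  rw [slope_def_field, logGamma_add_one hx, show x + 1 - x = (1:ℝ) by ring, div_one]
  ring

lemma abs_digamma_le {x : ℝ} (hx : 2 ≤ x) : |digamma x| ≤ x := by
  have h1 : digamma x ≤ Real.log x := digamma_le_log (by linarith)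
  have h2 : Real.log (x - 1) ≤ digamma x := by
    have := log_le_digamma (x := x - 1) (by linarith)
    rwa [sub_add_cancel] at this
  have h3 : (0:ℝ) ≤ Real.log (x - 1) := Real.log_nonneg (by linarith)
  have h4 : Real.log x ≤ x - 1 := Real.log_le_sub_one_of_pos (by linarith)
  rw [abs_le]; constructor <;> linarith

lemma Gamma_mul_rpow_le {x a : ℝ} (hx : 1 ≤ x) (ha : 1 < a) :
    Real.Gamma x * x ^ a ≤ Real.Gamma (x + a) := by
  have hx0 : 0 < x := by linarith
  have h := Real.convexOn_log_Gamma.deriv_le_slope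
    (Set.mem_Ioi.2 (by linarith : (0:ℝ) < x + 1))
    (Set.mem_Ioi.2 (by linarith : (0:ℝ) < x + a)) (by linarith)
    (diffAt_logGamma (by linarith))
  rw [← digamma_eq] at h
  have h2 : Real.log x ≤ digamma (x + 1) := log_le_digamma hx0
  rw [slope_def_field] at h
  have ha1 : (0:ℝ) < a - 1 := by linarith
  set f : ℝ → ℝ := Real.log ∘ Real.Gamma with hf
  have h3 : Real.log x * (a - 1) ≤ f (x + a) - f (x + 1) := by
    have h' : Real.log x ≤ (f (x + a) - f (x + 1)) / (x + a - (x + 1)) := h2.trans h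
    rw [show x + a - (x + 1) = a - 1 by ring, le_div_iff₀ ha1] at h'
    linarith
  have h4 : f x + Real.log x * a ≤ f (x + a) := by
    have := logGamma_add_one hx0
    rw [← hf] at this
    nlinarith [this]
  calc Real.Gamma x * x ^ a = Real.exp (f x + Real.log x * a) := by
        simp only [hf, Function.comp_apply]
        rw [Real.exp_add, Real.exp_log (Real.Gamma_pos_of_pos hx0),
          Real.rpow_def_of_pos hx0]
  _ ≤ Real.exp (f (x + a)) := Real.exp_le_exp.2 h4
  _ = Real.Gamma (x + a) := Real.exp_log (Real.Gamma_pos_of_pos (by linarith))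


lemma integrable_pow_exp {s : ℝ} (k : ℕ) (hs : 0 < s) :
    IntegrableOn (fun t : ℝ => t ^ k * Real.exp (-(s * t))) (Set.Ioi 0) := by
  have h0 := Real.GammaIntegral_convergent (s := (k : ℝ) + 1) (by positivity)
  have h1 : IntegrableOn (fun t : ℝ => Real.exp (-(s * t)) * (s * t) ^ ((k:ℝ) + 1 - 1))
      (Set.Ioi 0) := by
    have := (integrableOn_Ioi_comp_mul_left_iff
      (fun x : ℝ => Real.exp (-x) * x ^ ((k:ℝ) + 1 - 1)) 0 hs).mpr (by simpa using h0)
    simpa using this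
  have h2 : (fun t : ℝ => t ^ k * Real.exp (-(s * t)))
      = fun t : ℝ => (s ^ k)⁻¹ * (Real.exp (-(s * t)) * (s * t) ^ ((k:ℝ) + 1 - 1)) := by
    funext t
    rw [add_sub_cancel_right, Real.rpow_natCast, mul_pow]
    field_simp
  rw [h2]
  exact h1.const_mul _

lemma integral_pow_exp {s : ℝ} (k : ℕ) (hs : 0 < s) :
    ∫ t in Set.Ioi (0:ℝ), t ^ k * Real.exp (-(s * t))
      = (k.factorial : ℝ) * s ^ (-(k:ℝ) - 1) := by
  have h := Real.integral_rpow_mul_exp_neg_mul_Ioi (a := (k:ℝ) + 1) (by positivity) hs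
  simp_rw [add_sub_cancel_right, Real.rpow_natCast] at h
  rw [h, Real.Gamma_nat_eq_factorial, one_div, Real.inv_rpow hs.le, ← Real.rpow_neg hs.le,
    show -((k:ℝ) + 1) = -(k:ℝ) - 1 by ring, mul_comm]


lemma summable_major {α β s : ℝ} (hα : 1 < α) (hβ : 0 < β) (hs : 0 < s) :
    Summable (fun k : ℕ =>
      (α * k + β) * ((k.factorial : ℝ) * s ^ (-(k:ℝ) - 1)) / Real.Gamma (α * k + β)) := by
  apply summable_of_ratio_norm_eventually_le (r := 1/2) (by norm_num)
  have hx_tendsto : Tendsto (fun k : ℕ => α * k + β) atTop atTop := by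
    apply tendsto_atTop_add_const_right
    exact (tendsto_natCast_atTop_atTop : Tendsto (fun k : ℕ => (k:ℝ)) atTop atTop).const_mul_atTop (by linarith)
  have hpow : Tendsto (fun k : ℕ => (α * k + β) ^ (α - 1)) atTop atTop :=
    (tendsto_rpow_atTop (by linarith)).comp hx_tendsto
  filter_upwards [hx_tendsto.eventually_ge_atTop (max 2 α),
    hpow.eventually_ge_atTop (8 / s), eventually_ge_atTop 1] with k hk1 hk2 hk3
  set x : ℝ := α * k + β with hxdef
  have hx2 : (2:ℝ) ≤ x := le_trans (le_max_left _ _) hk1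
  have hxa : α ≤ x := le_trans (le_max_right _ _) hk1
  have hx0 : (0:ℝ) < x := by linarith
  have hkx : (k:ℝ) ≤ x := by
    have : (k:ℝ) ≤ α * k := le_mul_of_one_le_left (Nat.cast_nonneg k) hα.le
    linarith
  have hu0 : (0:ℝ) < x ^ (α - 1) := Real.rpow_pos_of_pos hx0 _
  set u : ℝ := x ^ (α - 1) with hudef
  have hG0 : 0 < Real.Gamma x := Real.Gamma_pos_of_pos hx0
  have hGa0 : 0 < Real.Gamma (x + α) := Real.Gamma_pos_of_pos (by linarith)
  have hP0 : (0:ℝ) < s ^ (-(k:ℝ) - 1) := Real.rpow_pos_of_pos hs _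
  have hF0 : (0:ℝ) < (k.factorial : ℝ) := by positivity
  set F : ℝ := (k.factorial : ℝ) with hFdef
  set P : ℝ := s ^ (-(k:ℝ) - 1) with hPdef
  -- rewrite the (k+1)-term
  have hxsucc : α * ((k:ℕ)+1 : ℕ) + β = x + α := by push_cast; ring
  have hfacsucc : ((k+1).factorial : ℝ) = ((k:ℝ) + 1) * F := by
    rw [Nat.factorial_succ]; push_cast; ring
  have hpsucc : s ^ (-((k:ℕ)+1 : ℕ) - 1 : ℝ) = P * s⁻¹ := by
    rw [hPdef, ← Real.rpow_neg_one s, ← Real.rpow_add hs]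
    push_cast; ring_nf
  have hxα : x ^ α = u * x := by
    conv_lhs => rw [show α = (α - 1) + 1 by ring]
    rw [Real.rpow_add hx0, Real.rpow_one, hudef]
  have hGbound : Real.Gamma x * (u * x) ≤ Real.Gamma (x + α) := by
    rw [← hxα]; exact Gamma_mul_rpow_le (by linarith) hα
  have hGB0 : 0 < Real.Gamma x * (u * x) := by positivity
  rw [Real.norm_eq_abs, Real.norm_eq_abs, abs_of_pos (by positivity),
    abs_of_pos (by positivity)]
  rw [hxsucc, hfacsucc, hpsucc]
  calc (x + α) * (((k:ℝ) + 1) * F * (P * s⁻¹)) / Real.Gamma (x + α)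
      ≤ (x + α) * (((k:ℝ) + 1) * F * (P * s⁻¹)) / (Real.Gamma x * (u * x)) := by
        apply div_le_div_of_nonneg_left (by positivity) hGB0 hGbound
    _ = ((x + α) * (((k:ℝ) + 1) * s⁻¹) / (u * x)) * (F * P / Real.Gamma x) := by
        field_simp
    _ ≤ (x / 2) * (F * P / Real.Gamma x) := by
        apply mul_le_mul_of_nonneg_right _ (by positivity)
        rw [div_le_iff₀ (by positivity)]
        have hs' : s⁻¹ ≤ u / 8 := by
          rw [div_le_iff₀ hs] at hk2
          rw [inv_eq_one_div, div_le_div_iff₀ hs (by norm_num)]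
          linarith
        have e1 : (x + α) * (((k:ℝ) + 1) * s⁻¹) ≤ (2*x) * ((2*x) * (u/8)) := by
          have hk1x : (k:ℝ) + 1 ≤ 2*x := by linarith
          apply mul_le_mul (by linarith) ?_ (by positivity) (by positivity)
          apply mul_le_mul hk1x hs' (by positivity) (by positivity)
        have e2 : (2*x) * ((2*x) * (u/8)) = x / 2 * (u * x) := by ring
        linarith
    _ = 1/2 * (x * (F * P) / Real.Gamma x) := by ring


lemma summable_norm_series {α β s : ℝ} (hα : 1 < α) (hβ : 0 < β) (hs : 0 < s) :
    Summable (fun k : ℕ =>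
      |digamma (α * k + β)| / Real.Gamma (α * k + β)
        * ((k.factorial : ℝ) * s ^ (-(k:ℝ) - 1))) := by
  apply summable_of_isBigO_nat (summable_major hα hβ hs)
  apply Asymptotics.IsBigO.of_bound 1
  have hx_tendsto : Tendsto (fun k : ℕ => α * k + β) atTop atTop := by
    apply tendsto_atTop_add_const_right
    exact (tendsto_natCast_atTop_atTop :
      Tendsto (fun k : ℕ => (k:ℝ)) atTop atTop).const_mul_atTop (by linarith)
  filter_upwards [hx_tendsto.eventually_ge_atTop 2] with k hk2
  set x : ℝ := α * k + β with hxdef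
  have hx0 : (0:ℝ) < x := by linarith
  have hG0 : 0 < Real.Gamma x := Real.Gamma_pos_of_pos hx0
  have hP0 : (0:ℝ) ≤ (k.factorial : ℝ) * s ^ (-(k:ℝ) - 1) := by positivity
  rw [Real.norm_eq_abs, Real.norm_eq_abs, one_mul,
    abs_of_nonneg (mul_nonneg (div_nonneg (abs_nonneg _) hG0.le) hP0),
    abs_of_nonneg (div_nonneg (mul_nonneg hx0.le hP0) hG0.le)]
  have h1 : x * ((k.factorial : ℝ) * s ^ (-(k:ℝ) - 1)) / Real.Gamma x
      = x / Real.Gamma x * ((k.factorial : ℝ) * s ^ (-(k:ℝ) - 1)) := by ring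
  rw [h1]
  exact mul_le_mul_of_nonneg_right
    ((div_le_div_iff_of_pos_right hG0).mpr (abs_digamma_le hk2)) hP0

theorem laplace_deriv_beta_ML_pure (α β s : ℝ) (hα : 1 < α) (hβ : 0 < β) (hs : 0 < s) :
    (∫ t in Set.Ioi (0 : ℝ), Real.exp (-(s * t)) *
        ∑' k : ℕ, (-(digamma (α * k + β) / Real.Gamma (α * k + β))) * t ^ k)
      = -∑' k : ℕ, ((k.factorial : ℝ) * digamma (α * k + β) / Real.Gamma (α * k + β)) *
          s ^ (-(k : ℝ) - 1) := by
  set c : ℕ → ℝ := fun k => -(digamma (α * k + β) / Real.Gamma (α * k + β)) with hc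
  have hG0 : ∀ k : ℕ, 0 < Real.Gamma (α * k + β) := fun k =>
    Real.Gamma_pos_of_pos (by positivity)
  have hint : ∀ k : ℕ, IntegrableOn (fun t : ℝ => Real.exp (-(s * t)) * (c k * t ^ k))
      (Set.Ioi 0) := by
    intro k
    have h := (integrable_pow_exp k hs).const_mul (c k)
    have he : (fun t : ℝ => Real.exp (-(s * t)) * (c k * t ^ k))
        = fun t : ℝ => c k * (t ^ k * Real.exp (-(s * t))) := by funext t; ring
    rw [he]; exact h
  have hval : ∀ k : ℕ, (∫ t in Set.Ioi (0:ℝ), Real.exp (-(s * t)) * (c k * t ^ k))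
      = c k * ((k.factorial : ℝ) * s ^ (-(k:ℝ) - 1)) := by
    intro k
    have he : (fun t : ℝ => Real.exp (-(s * t)) * (c k * t ^ k))
        = fun t : ℝ => c k * (t ^ k * Real.exp (-(s * t))) := by funext t; ring
    rw [he, MeasureTheory.integral_const_mul, integral_pow_exp k hs]
  have hnorm : ∀ k : ℕ, (∫⁻ t in Set.Ioi (0:ℝ), ‖Real.exp (-(s * t)) * (c k * t ^ k)‖ₑ)
      = ENNReal.ofReal (|digamma (α * k + β)| / Real.Gamma (α * k + β)
        * ((k.factorial : ℝ) * s ^ (-(k:ℝ) - 1))) := by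
    intro k
    rw [← MeasureTheory.ofReal_integral_norm_eq_lintegral_enorm (hint k)]
    congr 1
    have habs : |c k| = |digamma (α * k + β)| / Real.Gamma (α * k + β) := by
      rw [hc, abs_neg, abs_div, abs_of_pos (hG0 k)]
    rw [← habs]
    have he : ∀ t ∈ Set.Ioi (0:ℝ), ‖Real.exp (-(s * t)) * (c k * t ^ k)‖
        = |c k| * (t ^ k * Real.exp (-(s * t))) := by
      intro t ht
      rw [Real.norm_eq_abs, abs_mul, abs_mul, abs_of_pos (Real.exp_pos _),
        abs_pow, abs_of_pos (Set.mem_Ioi.mp ht)]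
      ring
    rw [MeasureTheory.setIntegral_congr_fun measurableSet_Ioi he,
      MeasureTheory.integral_const_mul, integral_pow_exp k hs]
  have hsum := summable_norm_series hα hβ hs
  have hmeas : ∀ k : ℕ, AEStronglyMeasurable (fun t : ℝ => Real.exp (-(s * t)) * (c k * t ^ k))
      (volume.restrict (Set.Ioi 0)) := by
    intro k
    exact (((continuous_const.mul continuous_id).neg.rexp.mul
      (continuous_const.mul (continuous_pow k)))).aestronglyMeasurable
  have hlint : (∑' k : ℕ, ∫⁻ t in Set.Ioi (0:ℝ), ‖Real.exp (-(s * t)) * (c k * t ^ k)‖ₑ) ≠ ⊤ := by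
    rw [tsum_congr hnorm, ← ENNReal.ofReal_tsum_of_nonneg (fun k => by positivity) hsum]
    exact ENNReal.ofReal_ne_top
  have hswap : (∫ t in Set.Ioi (0:ℝ), ∑' k : ℕ, Real.exp (-(s * t)) * (c k * t ^ k))
      = ∑' k : ℕ, ∫ t in Set.Ioi (0:ℝ), Real.exp (-(s * t)) * (c k * t ^ k) :=
    MeasureTheory.integral_tsum hmeas hlint
  have hlhs : (∫ t in Set.Ioi (0 : ℝ), Real.exp (-(s * t)) * ∑' k : ℕ, c k * t ^ k)
      = ∫ t in Set.Ioi (0:ℝ), ∑' k : ℕ, Real.exp (-(s * t)) * (c k * t ^ k) := by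
    congr 1
    funext t
    exact (tsum_mul_left).symm
  rw [hlhs, hswap, tsum_congr hval, ← tsum_neg]
  apply tsum_congr
  intro k
  rw [hc]
  ring
end

section
/- Let α > 0, β > 0, and let s > 0 be a real number. Then ∫₀^∞ e^{−st} · (∑_{k=0}^∞ (− k · ψ(αk+β) / (k! · Γ(αk+β))) · t^k) dt = − (1/s) · ∑_{k=0}^∞ s^{−k} · k · ψ(αk+β) / Γ(αk+β). (The integrand series is the term-by-term derivative with respect to α of the Wright function W_{α,β}(t).) -/
open Real MeasureTheory

set_option maxHeartbeats 1000000

lemma WA.logGamma_diffAt {x : ℝ} (hx : 0 < x) :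
    DifferentiableAt ℝ (fun y : ℝ => Real.log (Real.Gamma y)) x := by
  have h : ∀ m : ℕ, x ≠ -(m : ℝ) := fun m =>
    ((neg_nonpos.mpr (Nat.cast_nonneg m)).trans_lt hx).ne'
  exact (Real.differentiableAt_Gamma h).log (Real.Gamma_pos_of_pos hx).ne'

lemma WA.hconv : ConvexOn ℝ (Set.Ioi 0) (fun y : ℝ => Real.log (Real.Gamma y)) :=
  Real.convexOn_log_Gamma

lemma WA.digamma_nonneg {x : ℝ} (hx : 2 ≤ x) : 0 ≤ digamma x := by
  have hx0 : (0 : ℝ) < x := by linarith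
  have hx1 : (0 : ℝ) < x - 1 := by linarith
  have h := WA.hconv.slope_le_deriv (Set.mem_Ioi.mpr hx1) (Set.mem_Ioi.mpr hx0)
    (by linarith) (WA.logGamma_diffAt hx0)
  rw [slope_def_field] at h
  have hg : Real.Gamma x = (x - 1) * Real.Gamma (x - 1) := by
    have := Real.Gamma_add_one hx1.ne'
    rwa [sub_add_cancel] at this
  have hΓpos := Real.Gamma_pos_of_pos hx1
  have hlog : Real.log (Real.Gamma x) - Real.log (Real.Gamma (x - 1)) = Real.log (x - 1) := by
    rw [hg, Real.log_mul hx1.ne' hΓpos.ne']; ring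
  have h2 : Real.log (x - 1) ≤ digamma x := by
    have hx1' : x - (x - 1) = 1 := by ring
    rw [hx1', div_one, hlog] at h
    exact h
  exact le_trans (Real.log_nonneg (by linarith)) h2

lemma WA.digamma_le {x : ℝ} (hx : 2 ≤ x) : digamma x ≤ x := by
  have hx0 : (0 : ℝ) < x := by linarith
  have h := WA.hconv.deriv_le_slope (Set.mem_Ioi.mpr hx0)
    (Set.mem_Ioi.mpr (by linarith : (0:ℝ) < x + 1)) (lt_add_one x) (WA.logGamma_diffAt hx0)
  rw [slope_def_field] at h
  have hΓpos := Real.Gamma_pos_of_pos hx0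
  have hlog : Real.log (Real.Gamma (x + 1)) - Real.log (Real.Gamma x) = Real.log x := by
    rw [Real.Gamma_add_one hx0.ne', Real.log_mul hx0.ne' hΓpos.ne']; ring
  have hx1' : x + 1 - x = 1 := by ring
  rw [hx1', div_one, hlog] at h
  calc digamma x ≤ Real.log x := h
    _ ≤ x - 1 := Real.log_le_sub_one_of_pos hx0
    _ ≤ x := by linarith

lemma WA.fact_mul_Gamma_le {x : ℝ} (hx : 1 ≤ x) (n : ℕ) :
    (n.factorial : ℝ) * Real.Gamma x ≤ Real.Gamma (x + n) := by
  induction n with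
  | zero => simp
  | succ n ih =>
    have hxn : (0 : ℝ) < x + n := by positivity
    have h1 : Real.Gamma (x + (n + 1 : ℕ)) = (x + n) * Real.Gamma (x + n) := by
      have := Real.Gamma_add_one hxn.ne'
      rw [← this]; push_cast; ring_nf
    rw [h1]
    have h2 : ((n + 1 : ℕ) : ℝ) * ((n.factorial : ℝ) * Real.Gamma x) ≤ (x + n) * Real.Gamma (x + n) := by
      apply mul_le_mul
      · push_cast; linarith
      · exact ih
      · positivity
      · positivity
    calc ((n + 1).factorial : ℝ) * Real.Gamma x
        = ((n + 1 : ℕ) : ℝ) * ((n.factorial : ℝ) * Real.Gamma x) := by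
          rw [Nat.factorial_succ]; push_cast; ring
      _ ≤ _ := h2

lemma WA.exists_gamma_min : ∃ m : ℝ, 0 < m ∧ ∀ y ∈ Set.Icc (1:ℝ) 2, m ≤ Real.Gamma y := by
  have hc : ContinuousOn Real.Gamma (Set.Icc (1:ℝ) 2) := by
    intro y hy
    have hy0 : (0:ℝ) < y := lt_of_lt_of_le one_pos hy.1
    have h : ∀ m : ℕ, y ≠ -(m : ℝ) := fun m =>
      ((neg_nonpos.mpr (Nat.cast_nonneg m)).trans_lt hy0).ne'
    exact (Real.differentiableAt_Gamma h).continuousAt.continuousWithinAt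
  obtain ⟨z, hz, hmin⟩ := isCompact_Icc.exists_isMinOn (Set.nonempty_Icc.mpr one_le_two) hc
  exact ⟨Real.Gamma z, Real.Gamma_pos_of_pos (lt_of_lt_of_le one_pos hz.1),
    fun y hy => hmin hy⟩

lemma WA.summable_u (α β s : ℝ) (hα : 0 < α) (hβ : 0 < β) (hs : 0 < s) :
    Summable (fun n : ℕ =>
      (n : ℝ) * |digamma (α * n + β)| * (1/s)^(n+1) / Real.Gamma (α * n + β)) := by
  obtain ⟨m, hm, hmle⟩ := WA.exists_gamma_min
  set A : ℝ := max 2 (2 / s) with hA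
  have hA2 : (2:ℝ) ≤ A := le_max_left _ _
  have hA0 : (0:ℝ) < A := by linarith
  have hsA : 1 / s ≤ A / 2 := by
    have h : 2 / s ≤ A := le_max_right _ _
    have : 1 / s = (2 / s) / 2 := by ring
    rw [this]
    linarith
  set R : ℝ := A ^ (α⁻¹) with hR
  have hR0 : (0:ℝ) < R := Real.rpow_pos_of_pos hA0 _
  have hR1 : (1:ℝ) ≤ R := by
    have := Real.rpow_le_rpow_of_exponent_le (by linarith : (1:ℝ) ≤ A)
      (by positivity : (0:ℝ) ≤ α⁻¹)
    calc (1:ℝ) = A ^ (0:ℝ) := (Real.rpow_zero A).symm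
      _ ≤ A ^ (α⁻¹) := Real.rpow_le_rpow_of_exponent_le (by linarith) (by positivity)
  have hRA : ∀ n : ℕ, R ^ ((α * n : ℝ)) = A ^ n := by
    intro n
    rw [hR, ← Real.rpow_natCast A n, ← Real.rpow_mul hA0.le]
    congr 1
    field_simp
  have hRb : (0:ℝ) < R ^ (β - 2 : ℝ) := Real.rpow_pos_of_pos hR0 _
  -- the dominating constant
  set D : ℝ := (α + β) * Real.exp R / (m * R ^ (β - 2 : ℝ)) * (1 / s) with hD
  have hD0 : 0 ≤ D := by positivity
  set v : ℕ → ℝ := fun n => D * (((n : ℝ) + 1)^2 * (1/2 : ℝ)^n) with hv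
  have hsv : Summable v := by
    have h1 : Summable (fun n : ℕ => ((n : ℝ))^2 * (1/2 : ℝ)^n) := by
      have := summable_pow_mul_geometric_of_norm_lt_one (R := ℝ) 2
        (r := (1/2 : ℝ)) (by rw [Real.norm_eq_abs, abs_of_pos] <;> norm_num)
      exact this
    have h2 : Summable (fun n : ℕ => (((n+1 : ℕ) : ℝ))^2 * (1/2 : ℝ)^(n+1)) :=
      (summable_nat_add_iff (f := fun n : ℕ => ((n : ℝ))^2 * (1/2 : ℝ)^n) 1).mpr h1
    have h3 : Summable (fun n : ℕ => (2 * D) * ((((n+1 : ℕ)) : ℝ)^2 * (1/2 : ℝ)^(n+1))) :=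
      h2.mul_left _
    apply h3.congr
    intro n
    push_cast
    ring
  set K : ℕ := ⌈2 / α⌉₊ with hK
  have hKle : ∀ n : ℕ, K ≤ n → (2:ℝ) ≤ α * n + β := by
    intro n hn
    have h1 : (2 / α : ℝ) ≤ K := Nat.le_ceil _
    have h2 : (K : ℝ) ≤ n := Nat.cast_le.mpr hn
    have : (2 : ℝ) ≤ α * n := by
      rw [div_le_iff₀ hα] at h1
      nlinarith
    linarith
  -- key bound
  have hbound : ∀ n : ℕ, K ≤ n →
      (n : ℝ) * |digamma (α * n + β)| * (1/s)^(n+1) / Real.Gamma (α * n + β) ≤ v n := by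
    intro n hn
    set x : ℝ := α * n + β with hx
    have hx2 : (2:ℝ) ≤ x := hKle n hn
    have hx0 : (0:ℝ) < x := by linarith
    have hΓ0 : 0 < Real.Gamma x := Real.Gamma_pos_of_pos hx0
    have hψ : |digamma x| ≤ x := by
      rw [abs_of_nonneg (WA.digamma_nonneg hx2)]; exact WA.digamma_le hx2
    -- Gamma lower bound
    set N : ℕ := ⌊x - 1⌋₊ with hN
    have hNle : (N : ℝ) ≤ x - 1 := Nat.floor_le (by linarith)
    have hNge : x - 2 ≤ (N : ℝ) := by
      have := Nat.lt_floor_add_one (x - 1)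
      linarith
    have hy1 : (1:ℝ) ≤ x - N := by linarith
    have hy2 : x - N ≤ 2 := by linarith
    have hgm : m ≤ Real.Gamma (x - N) := hmle _ ⟨hy1, hy2⟩
    have hfact : (N.factorial : ℝ) * Real.Gamma (x - N) ≤ Real.Gamma x := by
      have := WA.fact_mul_Gamma_le hy1 N
      rwa [sub_add_cancel] at this
    have hΓge : m * (N.factorial : ℝ) ≤ Real.Gamma x := by
      calc m * (N.factorial : ℝ) ≤ Real.Gamma (x - N) * (N.factorial : ℝ) := by
            apply mul_le_mul_of_nonneg_right hgm (by positivity)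
        _ = (N.factorial : ℝ) * Real.Gamma (x - N) := by ring
        _ ≤ Real.Gamma x := hfact
    -- factorial lower bound via exp
    have hRN : A ^ n * R ^ (β - 2 : ℝ) ≤ Real.exp R * N.factorial := by
      have e1 : A ^ n * R ^ (β - 2 : ℝ) = R ^ (α * n + (β - 2) : ℝ) := by
        rw [Real.rpow_add hR0, hRA]
      have e2 : R ^ (α * n + (β - 2) : ℝ) ≤ R ^ ((N : ℝ)) :=
        Real.rpow_le_rpow_of_exponent_le hR1 (by linarith)
      have e3 : R ^ ((N : ℝ)) = R ^ N := Real.rpow_natCast R N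
      have e4 : R ^ N ≤ Real.exp R * N.factorial := by
        have := Real.pow_div_factorial_le_exp (x := R) hR0.le N
        rw [div_le_iff₀ (by positivity : (0:ℝ) < (N.factorial : ℝ))] at this
        linarith [this]
      calc A ^ n * R ^ (β - 2 : ℝ) = R ^ (α * n + (β - 2) : ℝ) := e1
        _ ≤ R ^ ((N:ℝ)) := e2
        _ = R ^ N := e3
        _ ≤ _ := e4
    have hΓbig : m * (A ^ n * R ^ (β - 2 : ℝ) / Real.exp R) ≤ Real.Gamma x := by
      have h1 : A ^ n * R ^ (β - 2 : ℝ) / Real.exp R ≤ (N.factorial : ℝ) := by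
        rw [div_le_iff₀ (Real.exp_pos R)]
        calc A ^ n * R ^ (β - 2:ℝ) ≤ Real.exp R * N.factorial := hRN
          _ = (N.factorial : ℝ) * Real.exp R := by ring
      calc m * (A ^ n * R ^ (β - 2:ℝ) / Real.exp R) ≤ m * (N.factorial : ℝ) :=
            mul_le_mul_of_nonneg_left h1 hm.le
        _ ≤ Real.Gamma x := hΓge
    have hdenpos : (0:ℝ) < m * (A ^ n * R ^ (β - 2 : ℝ) / Real.exp R) := by positivity
    -- numerator bound
    have hnum : (n : ℝ) * |digamma x| ≤ (α + β) * ((n:ℝ) + 1)^2 := by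
      have h1 : (n : ℝ) * |digamma x| ≤ (n:ℝ) * x :=
        mul_le_mul_of_nonneg_left hψ (Nat.cast_nonneg n)
      have h2 : (n:ℝ) * x ≤ (α + β) * ((n:ℝ)+1)^2 := by
        rw [hx]; nlinarith [Nat.cast_nonneg (α := ℝ) n, sq_nonneg ((n:ℝ))]
      linarith
    calc (n : ℝ) * |digamma x| * (1/s)^(n+1) / Real.Gamma x
        ≤ ((α + β) * ((n:ℝ)+1)^2) * (1/s)^(n+1) /
            (m * (A ^ n * R ^ (β - 2:ℝ) / Real.exp R)) := by
          gcongr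
      _ = ((α + β) * Real.exp R / (m * R ^ (β - 2:ℝ)) * (1/s)) *
            (((n:ℝ)+1)^2 * ((1/s)^n / A^n)) := by
          rw [pow_succ]
          have hs0 : s ≠ 0 := hs.ne'
          have e : s * s⁻¹ = 1 := mul_inv_cancel₀ hs0
          field_simp
          linear_combination (s⁻¹ ^ n) * e
      _ ≤ ((α + β) * Real.exp R / (m * R ^ (β - 2:ℝ)) * (1/s)) *
            (((n:ℝ)+1)^2 * (1/2:ℝ)^n) := by
          have h1 : (1/s:ℝ)^n / A^n = ((1/s)/A)^n := (div_pow _ _ _).symm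
          have h2 : ((1/s)/A : ℝ) ≤ 1/2 := by
            rw [div_le_iff₀ hA0]
            calc (1/s : ℝ) ≤ A / 2 := hsA
              _ = 1/2 * A := by ring
          have h3 : (0:ℝ) ≤ (1/s)/A := by positivity
          have h4 : ((1/s)/A : ℝ)^n ≤ (1/2:ℝ)^n := pow_le_pow_left₀ h3 h2 n
          rw [h1]
          gcongr
      _ = v n := by rw [hv, hD]
  -- conclude
  have hvK : Summable (fun k : ℕ => v (k + K)) := (summable_nat_add_iff K).mpr hsv
  have hsum : Summable (fun k : ℕ =>
      ((k + K : ℕ) : ℝ) * |digamma (α * (k + K : ℕ) + β)| * (1/s)^((k + K) + 1) /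
        Real.Gamma (α * (k + K : ℕ) + β)) := by
    apply Summable.of_nonneg_of_le _ _ hvK
    · intro k
      have : (0:ℝ) < Real.Gamma (α * (k + K : ℕ) + β) :=
        Real.Gamma_pos_of_pos (by positivity)
      positivity
    · intro k
      exact hbound (k + K) (Nat.le_add_left K k)
  exact (summable_nat_add_iff K).mp hsum

theorem laplace_deriv_alpha_Wright (α β s : ℝ) (hα : 0 < α) (hβ : 0 < β) (hs : 0 < s) :
    (∫ t in Set.Ioi (0 : ℝ), Real.exp (-(s * t)) *
        ∑' k : ℕ, (-((k : ℝ) * digamma (α * k + β) /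
          (k.factorial * Real.Gamma (α * k + β)))) * t ^ k)
      = -((1 / s) * ∑' k : ℕ, s ^ (-(k : ℝ)) * k * digamma (α * k + β) /
          Real.Gamma (α * k + β)) := by
  have hΓpos : ∀ k : ℕ, 0 < Real.Gamma (α * k + β) := fun k =>
    Real.Gamma_pos_of_pos (by positivity)
  set c : ℕ → ℝ := fun k =>
    -((k : ℝ) * digamma (α * k + β) / (k.factorial * Real.Gamma (α * k + β))) with hc
  set F : ℕ → ℝ → ℝ := fun k t => c k * (Real.exp (-(s * t)) * t ^ k) with hF
  -- the basic integral
  have key : ∀ k : ℕ, (∫ t in Set.Ioi (0:ℝ), Real.exp (-(s * t)) * t ^ k)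
      = (1/s)^(k+1) * (k.factorial : ℝ) := by
    intro k
    have h := Real.integral_rpow_mul_exp_neg_mul_Ioi (a := (k : ℝ) + 1) (by positivity) hs
    rw [show ((k:ℝ) + 1) - 1 = (k:ℝ) by ring] at h
    have h2 : (∫ t in Set.Ioi (0:ℝ), Real.exp (-(s * t)) * t ^ k)
        = ∫ t in Set.Ioi (0:ℝ), t ^ ((k:ℝ)) * Real.exp (-(s * t)) := by
      refine setIntegral_congr_fun measurableSet_Ioi (fun t ht => ?_)
      rw [Real.rpow_natCast, mul_comm]
    rw [h2, h, show ((k:ℝ) + 1) = ((k+1 : ℕ) : ℝ) by push_cast; ring, Real.rpow_natCast]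
    rw [show (((k+1:ℕ)):ℝ) = (k:ℝ) + 1 by push_cast; ring, Real.Gamma_nat_eq_factorial]
  -- integrability
  have hint : ∀ k : ℕ, IntegrableOn (fun t : ℝ => Real.exp (-(s * t)) * t ^ k)
      (Set.Ioi 0) := by
    intro k
    have h := integrableOn_rpow_mul_exp_neg_mul_rpow (p := 1) (s := (k:ℝ)) (b := s)
      (lt_of_lt_of_le (by norm_num) (Nat.cast_nonneg k)) one_pos hs
    refine h.congr_fun (fun x hx => ?_) measurableSet_Ioi
    dsimp only
    rw [Real.rpow_one, Real.rpow_natCast, mul_comm, neg_mul]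
  have hFint : ∀ k : ℕ, Integrable (F k) (volume.restrict (Set.Ioi 0)) := fun k =>
    ((hint k).const_mul (c k))
  -- norm integrals
  have hck : ∀ k : ℕ, |c k| = (k : ℝ) * |digamma (α * k + β)| /
      ((k.factorial : ℝ) * Real.Gamma (α * k + β)) := by
    intro k
    rw [hc]
    dsimp only
    rw [abs_neg, abs_div, abs_mul, Nat.abs_cast, abs_mul, Nat.abs_cast,
      abs_of_pos (hΓpos k)]
  have hnorm : ∀ k : ℕ, (∫ t in Set.Ioi (0:ℝ), ‖F k t‖)
      = |c k| * ((1/s)^(k+1) * (k.factorial : ℝ)) := by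
    intro k
    have heq : Set.EqOn (fun t => ‖F k t‖)
        (fun t => |c k| * (Real.exp (-(s * t)) * t ^ k)) (Set.Ioi 0) := by
      intro t ht
      have ht0 : (0:ℝ) < t := ht
      simp only [hF, Real.norm_eq_abs, abs_mul,
        abs_of_pos (Real.exp_pos _), abs_of_pos (pow_pos ht0 k)]
    rw [setIntegral_congr_fun measurableSet_Ioi heq, integral_const_mul, key k]
  have hsum : Summable (fun k : ℕ => ∫ t in Set.Ioi (0:ℝ), ‖F k t‖) := by
    apply Summable.congr (WA.summable_u α β s hα hβ hs)
    intro k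
    rw [hnorm k, hck k]
    have h1 : (k.factorial : ℝ) ≠ 0 := by positivity
    have h2 : Real.Gamma (α * k + β) ≠ 0 := (hΓpos k).ne'
    field_simp
  -- swap integral and sum
  have hswap := MeasureTheory.integral_tsum_of_summable_integral_norm hFint hsum
  have hmain : (∫ t in Set.Ioi (0:ℝ), Real.exp (-(s * t)) * ∑' k : ℕ, c k * t ^ k)
      = ∑' k : ℕ, ∫ t in Set.Ioi (0:ℝ), F k t := by
    have h1 : (∫ t in Set.Ioi (0:ℝ), Real.exp (-(s * t)) * ∑' k : ℕ, c k * t ^ k)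
        = ∫ t in Set.Ioi (0:ℝ), ∑' k : ℕ, F k t := by
      refine setIntegral_congr_fun measurableSet_Ioi (fun t _ => ?_)
      calc Real.exp (-(s * t)) * ∑' k : ℕ, c k * t ^ k
          = ∑' k : ℕ, Real.exp (-(s * t)) * (c k * t ^ k) := tsum_mul_left.symm
        _ = ∑' k : ℕ, F k t := tsum_congr fun k => by rw [hF]; ring
    rw [h1]
    exact hswap.symm
  rw [hmain]
  -- compute each integral and sum up
  have hFval : ∀ k : ℕ, (∫ t in Set.Ioi (0:ℝ), F k t)
      = c k * ((1/s)^(k+1) * (k.factorial : ℝ)) := by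
    intro k
    rw [hF]
    dsimp only
    rw [integral_const_mul, key k]
  calc ∑' k : ℕ, ∫ t in Set.Ioi (0:ℝ), F k t
      = ∑' k : ℕ, c k * ((1/s)^(k+1) * (k.factorial : ℝ)) := tsum_congr fun k => hFval k
    _ = ∑' k : ℕ, -((1/s) * (s ^ (-(k:ℝ)) * k * digamma (α * k + β) /
          Real.Gamma (α * k + β))) := by
        refine tsum_congr fun k => ?_
        rw [hc]
        dsimp only
        rw [Real.rpow_neg hs.le, Real.rpow_natCast]
        have h1 : (k.factorial : ℝ) ≠ 0 := by positivity
        have h2 : Real.Gamma (α * k + β) ≠ 0 := (hΓpos k).ne'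
        have hs0 : s ≠ 0 := hs.ne'
        have e : s * s ^ k * s⁻¹ * s⁻¹ ^ k = 1 := by rw [inv_pow]; field_simp
        field_simp
        linear_combination (-((k:ℝ) * digamma ((k:ℝ) * α + β))) * e
    _ = -((1 / s) * ∑' k : ℕ, s ^ (-(k : ℝ)) * k * digamma (α * k + β) /
          Real.Gamma (α * k + β)) := by
        rw [tsum_neg, tsum_mul_left]
end
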